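/- Define the total strain potential energy V_e(n) = Σ_{i : Fin n_e} (E i * A i / (2 * l0 i)) * (l i n − l0 i)². If n is a nodal configuration with l i n ≠ 0 for every member i, then V_e is differentiable at n and its gradient in the Euclidean space of nodal vectors is the nodal vector p ↦ Σ_i (x i n) * (C i p) • (h i n); equivalently, ∇V_e(n) = K(n) n where K(n) = (Cᵀ x̂ C) ⊗ I₃ is the stiffness matrix built from the force densities x i n. -/

import Mathlib

open scoped RealInnerProductSpace
open Matrix

noncomputable section

/-- The Euclidean space of nodal vectors of a structure with `n_n` nodes. -/
abbrev NodalSpace (n_n : ℕ) := PiLp 2 (fun _ : Fin n_n => EuclideanSpace ℝ (Fin 3))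

/-- The total strain potential energy `V_e(n) = Σ_i (E i * A i / (2 l0 i)) (l i n − l0 i)²`
is differentiable at any configuration with all member lengths nonzero, and its gradient is
the nodal vector `p ↦ Σ_i (x i n) (C i p) • (h i n)`, i.e. `∇V_e(n) = K(n) n` where `K(n)`
is the stiffness matrix built from the force densities `x i n`. -/
theorem hasGradientAt_strain_energy {n_n n_e : ℕ}
    (j k : Fin n_e → Fin n_n) (hjk : ∀ i, j i ≠ k i)
    (C : Matrix (Fin n_e) (Fin n_n) ℝ)
    (hC : ∀ i p, C i p = if p = k i then 1 else if p = j i then -1 else 0)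
    (A E l0 : Fin n_e → ℝ)
    (hA : ∀ i, 0 < A i) (hE : ∀ i, 0 < E i) (hl0 : ∀ i, 0 < l0 i)
    (n : NodalSpace n_n)
    (hl : ∀ i, ‖∑ q, C i q • n q‖ ≠ 0) :
    HasGradientAt
      (fun n' : NodalSpace n_n =>
        ∑ i, (E i * A i / (2 * l0 i)) * (‖∑ q, C i q • n' q‖ - l0 i) ^ 2)
      ((WithLp.equiv 2 (∀ _ : Fin n_n, EuclideanSpace ℝ (Fin 3))).symm
        fun p => ∑ i,
          ((E i * A i * (1 / l0 i - 1 / ‖∑ q, C i q • n q‖)) * C i p) • (∑ q, C i q • n q))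
      n := by
  classical
  set T : Fin n_e → (NodalSpace n_n →L[ℝ] EuclideanSpace ℝ (Fin 3)) :=
    fun i => ∑ q, C i q • (PiLp.proj (𝕜 := ℝ) 2 (fun _ : Fin n_n => EuclideanSpace ℝ (Fin 3)) q) with hT
  have hTapp : ∀ i (m : NodalSpace n_n), T i m = ∑ q, C i q • m q := by
    intro i m
    simp [hT, ContinuousLinearMap.sum_apply]
  set h : Fin n_e → EuclideanSpace ℝ (Fin 3) := fun i => ∑ q, C i q • n q with hh
  set x : Fin n_e → ℝ := fun i => E i * A i * (1 / l0 i - 1 / ‖h i‖) with hx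
  set D : Fin n_e → (NodalSpace n_n →L[ℝ] ℝ) :=
    fun i => x i • ((innerSL ℝ (h i)).comp (T i)) with hD
  have hDi : ∀ i, HasFDerivAt
      (fun n' : NodalSpace n_n => (E i * A i / (2 * l0 i)) * (‖∑ q, C i q • n' q‖ - l0 i) ^ 2)
      (D i) n := by
    intro i
    have hg : HasFDerivAt (fun n' : NodalSpace n_n => ‖T i n'‖ ^ 2)
        (2 • ((innerSL ℝ (T i n)).comp (T i))) n := (T i).hasFDerivAt.norm_sq
    have ht0 : ‖T i n‖ ^ 2 ≠ 0 := by
      rw [hTapp]; exact pow_ne_zero _ (hl i)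
    have hφ : HasDerivAt (fun t : ℝ => (E i * A i / (2 * l0 i)) * (Real.sqrt t - l0 i) ^ 2)
        ((E i * A i / (2 * l0 i)) * (2 * (Real.sqrt (‖T i n‖ ^ 2) - l0 i) ^ 1 *
          (1 / (2 * Real.sqrt (‖T i n‖ ^ 2))))) (‖T i n‖ ^ 2) :=
      (((Real.hasDerivAt_sqrt ht0).sub_const (l0 i)).pow 2).const_mul _
    have hcomp := hφ.comp_hasFDerivAt n hg
    have hsq : Real.sqrt (‖T i n‖ ^ 2) = ‖T i n‖ := Real.sqrt_sq (norm_nonneg _)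
    have hfun : (fun n' : NodalSpace n_n =>
        (E i * A i / (2 * l0 i)) * (Real.sqrt (‖T i n'‖ ^ 2) - l0 i) ^ 2) =
        fun n' => (E i * A i / (2 * l0 i)) * (‖∑ q, C i q • n' q‖ - l0 i) ^ 2 := by
      funext m
      rw [Real.sqrt_sq (norm_nonneg _), hTapp]
    rw [Function.comp_def, hfun] at hcomp
    refine hcomp.congr_fderiv ?_
    rw [hD, hTapp]
    ext v
    simp only [ContinuousLinearMap.smul_apply, ContinuousLinearMap.comp_apply,
      ContinuousLinearMap.smul_apply, smul_eq_mul, hsq, hTapp, two_smul,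
      ContinuousLinearMap.add_apply]
    rw [hx]
    have hln : ‖h i‖ ≠ 0 := hl i
    have hl0i : l0 i ≠ 0 := ne_of_gt (hl0 i)
    rw [hh]
    simp only [Real.sqrt_sq (norm_nonneg _)]
    have hln' : ‖∑ q, C i q • n q‖ ≠ 0 := hl i
    field_simp
    ring
  have hsum := HasFDerivAt.fun_sum (fun i (_ : i ∈ Finset.univ) => hDi i)
  rw [hasGradientAt_iff_hasFDerivAt]
  refine hsum.congr_fderiv ?_
  ext v
  rw [InnerProductSpace.toDual_apply_apply]
  rw [PiLp.inner_apply]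
  simp only [ContinuousLinearMap.sum_apply, hD, ContinuousLinearMap.smul_apply,
    ContinuousLinearMap.comp_apply, smul_eq_mul, WithLp.equiv_symm_apply, PiLp.toLp_apply]
  simp only [sum_inner, real_inner_smul_left]
  rw [Finset.sum_comm]
  refine Finset.sum_congr rfl fun i _ => ?_
  rw [hTapp]
  have hmap : ((innerSL ℝ) (h i)) (∑ q, C i q • v q) = ∑ q, C i q * ⟪h i, v q⟫ := by
    rw [_root_.map_sum]
    exact Finset.sum_congr rfl fun q _ => by simp [real_inner_smul_right]
  rw [hmap, Finset.mul_sum]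
  refine Finset.sum_congr rfl fun p _ => ?_
  have hhin : ⟪h i, v p⟫ = ∑ q, C i q * ⟪n q, v p⟫ := by
    rw [hh]
    rw [sum_inner]
    exact Finset.sum_congr rfl fun q _ => real_inner_smul_left _ _ _
  rw [hhin]
  ring

end
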